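/- If in the common leaf ordering of T' and S' (rooted binary trees with identical pre-order leaf sequences on leaf set of size N) all subtrees hanging off the left-spine path of T' and the right-spine path of S' have size at most 2N/C for C ≥ 4, and at least one such subtree has size at least N/log n, then there exists a 'good pair': a leaf x and a set Y with |Y| ≥ N/(2 log n), lca_{T'}(Y) ≺ lca_{T'}(Y ∪ {x}), and lca_{S'}(Y) ≺ lca_{S'}(Y ∪ {x}). -/

import Mathlib

/-- Rooted binary trees with leaves labeled by `X` (with designated left/right children). -/
inductive BTree (X : Type) where
  | leaf : X → BTree X
  | node : BTree X → BTree X → BTree X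

namespace BTree

variable {X : Type} [DecidableEq X]

/-- Left-to-right (pre-order) leaf sequence. -/
def seq : BTree X → List X
  | leaf x => [x]
  | node l r => seq l ++ seq r

/-- Leaf set. -/
def leaves (t : BTree X) : Finset X := t.seq.toFinset

/-- Number of leaves. -/
def size (t : BTree X) : ℕ := t.seq.length

/-- A phylogenetic tree: leaves are bijectively labeled (no repeated labels). -/
def Phylo (t : BTree X) : Prop := t.seq.Nodup

def isLeaf : BTree X → Prop
  | leaf _ => True
  | node _ _ => False

/-- A rooted caterpillar: every internal node (including the root) has a leaf child. -/
def isCaterpillar : BTree X → Prop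
  | leaf _ => True
  | node l r => (isLeaf l ∧ isCaterpillar r) ∨ (isLeaf r ∧ isCaterpillar l)

/-- A perfectly balanced binary tree. -/
def isPerfect : BTree X → Prop
  | leaf _ => True
  | node l r => isPerfect l ∧ isPerfect r ∧ size l = size r

/-- Restriction `T|A`: minimal subtree spanning the leaves in `A`, with degree-two
vertices suppressed; `none` if `A` contains no leaf of the tree. -/
def restrict : BTree X → Finset X → Option (BTree X)
  | leaf x, A => if x ∈ A then some (leaf x) else none
  | node l r, A =>
    match restrict l A, restrict r A with
    | some l', some r' => some (node l' r')
    | some l', none => some l'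
    | none, some r' => some r'
    | none, none => none

/-- Nodes of a tree are addressed by root-paths: `false` = go left, `true` = go right.
`subtreeAt t p` is the subtree rooted at the node with address `p` (if it exists). -/
def subtreeAt : BTree X → List Bool → Option (BTree X)
  | t, [] => some t
  | leaf _, _ :: _ => none
  | node l _, false :: p => subtreeAt l p
  | node _ r, true :: p => subtreeAt r p

/-- Address of the least common ancestor of a set of leaves. -/
def lcaPos : BTree X → Finset X → List Bool
  | leaf _, _ => []
  | node l r, A =>
    if A ⊆ l.leaves then false :: lcaPos l A
    else if A ⊆ r.leaves then true :: lcaPos r A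
    else []

/-- `v ⪯ u` in the ancestor order iff the address of `u` is a prefix of the address of `v`.
Two nodes are incomparable if neither address is a prefix of the other. -/
def Incomp (p q : List Bool) : Prop := ¬ p <+: q ∧ ¬ q <+: p

/-- `StrictBelow p q`: the node at address `p` is a strict descendant of the node at `q`. -/
def StrictBelow (p q : List Bool) : Prop := q <+: p ∧ p ≠ q

/-- Identity of rooted phylogenetic trees: label-preserving graph isomorphism
(the left/right designation is irrelevant). -/
def REq : BTree X → BTree X → Prop
  | leaf x, leaf y => x = y
  | node l r, node l' r' => (REq l l' ∧ REq r r') ∨ (REq l r' ∧ REq r l')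
  | _, _ => False

/-- The splits (edge-induced leaf bipartitions, each recorded by both of its sides)
of the unrooted tree obtained by de-rooting `t`. -/
def usplits (t : BTree X) : Set (Finset X) :=
  { A | ∃ p u, t.subtreeAt p = some u ∧ (A = u.leaves ∨ A = t.leaves \ u.leaves) }

/-- `t` and `s` de-root to identical unrooted phylogenetic trees. -/
def UEq (t s : BTree X) : Prop := t.leaves = s.leaves ∧ usplits t = usplits s

/-- Rooted agreement of `t` and `s` on leaf set `A`: `t|A = s|A` as rooted trees. -/
def RAgree (t s : BTree X) (A : Finset X) : Prop :=
  ∃ t' s', t.restrict A = some t' ∧ s.restrict A = some s' ∧ REq t' s'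

/-- Unrooted agreement of (the de-rootings of) `t` and `s` on leaf set `A`. -/
def UAgree (t s : BTree X) (A : Finset X) : Prop :=
  ∃ t' s', t.restrict A = some t' ∧ s.restrict A = some s' ∧ UEq t' s'

/-- `t` de-roots to an unrooted caterpillar. -/
def UCaterpillar (t : BTree X) : Prop := ∃ c : BTree X, isCaterpillar c ∧ UEq c t

/-- The subtrees hanging off the path from the left-most leaf to the root
(`Q_1, …, Q_k` in the paper; `Q_1` is the left-most leaf itself). -/
def leftSpine : BTree X → List (BTree X)
  | leaf x => [leaf x]
  | node l r => leftSpine l ++ [r]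

/-- The subtrees hanging off the path from the root to the right-most leaf
(`R_1, …, R_m` in the paper; `R_m` is the right-most leaf itself). -/
def rightSpine : BTree X → List (BTree X)
  | leaf x => [leaf x]
  | node l r => l :: rightSpine r

/-- Graph distance (number of edges) between leaves `x` and `y` in the unrooted
tree obtained by de-rooting `t` (the suppressed root accounts for the `-1`). -/
def udist (t : BTree X) (x y : X) : ℕ :=
  (lcaPos t {x}).length - (lcaPos t {x, y}).length +
    ((lcaPos t {y}).length - (lcaPos t {x, y}).length) -
    (if lcaPos t {x, y} = [] then 1 else 0)

end BTree

set_option linter.unusedSectionVars false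

namespace BTree

variable {X : Type} [DecidableEq X]

theorem seq_ne_nil (t : BTree X) : t.seq ≠ [] := by
  induction t with
  | leaf x => simp [seq]
  | node l r ihl ihr =>
    show l.seq ++ r.seq ≠ []
    intro h
    exact ihl (List.append_eq_nil_iff.mp h).1

theorem leaves_leaf (x : X) : (leaf x : BTree X).leaves = {x} := by
  simp [leaves, seq]

theorem leaves_node (l r : BTree X) : (node l r).leaves = l.leaves ∪ r.leaves := by
  simp [leaves, seq]

theorem phylo_node {l r : BTree X} (h : (node l r).Phylo) :
    l.Phylo ∧ r.Phylo ∧ Disjoint l.leaves r.leaves := by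
  have h' := h
  rw [Phylo, seq, List.nodup_append] at h'
  exact ⟨h'.1, h'.2.1, by rw [leaves, leaves, List.disjoint_toFinset_iff_disjoint]; exact fun a ha hb => h'.2.2 a ha a hb rfl⟩

theorem subtreeAt_seq_sublist {t v : BTree X} {p : List Bool}
    (h : t.subtreeAt p = some v) : v.seq.Sublist t.seq := by
  induction t generalizing p with
  | leaf x =>
    cases p with
    | nil => simp [subtreeAt] at h; subst h; exact List.Sublist.refl _
    | cons b p => simp [subtreeAt] at h
  | node l r ihl ihr =>
    cases p with
    | nil => simp [subtreeAt] at h; subst h; exact List.Sublist.refl _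
    | cons b p =>
      cases b with
      | false =>
        simp only [subtreeAt] at h
        exact (ihl h).trans (List.sublist_append_left _ _)
      | true =>
        simp only [subtreeAt] at h
        exact (ihr h).trans (List.sublist_append_right _ _)

theorem subtreeAt_leaves_subset {t v : BTree X} {p : List Bool}
    (h : t.subtreeAt p = some v) : v.leaves ⊆ t.leaves := by
  intro x hx
  rw [leaves, List.mem_toFinset] at hx ⊢
  exact (subtreeAt_seq_sublist h).mem hx

theorem subtreeAt_phylo {t v : BTree X} {p : List Bool}
    (h : t.subtreeAt p = some v) (ht : t.Phylo) : v.Phylo :=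
  (subtreeAt_seq_sublist h).nodup ht

theorem strict_of {t v : BTree X} {p : List Bool} {Y : Finset X} {x : X}
    (ht : t.Phylo) (hp : t.subtreeAt p = some v) (hY : Y.Nonempty)
    (hYv : Y ⊆ v.leaves) (hx : x ∈ t.leaves) (hxv : x ∉ v.leaves) :
    StrictBelow (lcaPos t Y) (lcaPos t (insert x Y)) := by
  induction t generalizing p v with
  | leaf a =>
    cases p with
    | nil => simp [subtreeAt] at hp; subst hp; exact absurd hx hxv
    | cons b p => simp [subtreeAt] at hp
  | node l r ihl ihr =>
    obtain ⟨hl, hr, hdisj⟩ := phylo_node ht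
    cases p with
    | nil => simp [subtreeAt] at hp; subst hp; exact absurd hx hxv
    | cons b p =>
      obtain ⟨y, hy⟩ := hY
      rw [leaves_node, Finset.mem_union] at hx
      cases b with
      | false =>
        simp only [subtreeAt] at hp
        have hvl : v.leaves ⊆ l.leaves := subtreeAt_leaves_subset hp
        have hYl : Y ⊆ l.leaves := hYv.trans hvl
        have h1 : lcaPos (node l r) Y = false :: lcaPos l Y := by
          rw [lcaPos, if_pos hYl]
        rcases hx with hx | hx
        · have h2 : lcaPos (node l r) (insert x Y) = false :: lcaPos l (insert x Y) := by
            rw [lcaPos, if_pos (Finset.insert_subset hx hYl)]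
          obtain ⟨hpre, hne⟩ := ihl hl hp hYv hx hxv
          rw [h1, h2]
          exact ⟨List.cons_prefix_cons.mpr ⟨rfl, hpre⟩, by simpa using hne⟩
        · have hxl : x ∉ l.leaves := fun hc => (Finset.disjoint_left.mp hdisj hc) hx
          have hyr : y ∉ r.leaves := fun hc => (Finset.disjoint_left.mp hdisj (hYl hy)) hc
          have h2 : lcaPos (node l r) (insert x Y) = [] := by
            rw [lcaPos, if_neg, if_neg]
            · intro hc; exact hyr (hc (Finset.mem_insert_of_mem hy))
            · intro hc; exact hxl (hc (Finset.mem_insert_self x Y))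
          rw [h1, h2]
          exact ⟨List.nil_prefix, by simp⟩
      | true =>
        simp only [subtreeAt] at hp
        have hvr : v.leaves ⊆ r.leaves := subtreeAt_leaves_subset hp
        have hYr : Y ⊆ r.leaves := hYv.trans hvr
        have hyl : y ∉ l.leaves := fun hc => (Finset.disjoint_left.mp hdisj hc) (hYr hy)
        have hYnl : ¬ Y ⊆ l.leaves := fun hc => hyl (hc hy)
        have h1 : lcaPos (node l r) Y = true :: lcaPos r Y := by
          rw [lcaPos, if_neg hYnl, if_pos hYr]
        rcases hx with hx | hx
        · have hxr : x ∉ r.leaves := fun hc => (Finset.disjoint_left.mp hdisj hx) hc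
          have h2 : lcaPos (node l r) (insert x Y) = [] := by
            rw [lcaPos, if_neg, if_neg]
            · intro hc; exact hxr (hc (Finset.mem_insert_self x Y))
            · intro hc; exact hyl (hc (Finset.mem_insert_of_mem hy))
          rw [h1, h2]
          exact ⟨List.nil_prefix, by simp⟩
        · have h2 : lcaPos (node l r) (insert x Y) = true :: lcaPos r (insert x Y) := by
            rw [lcaPos, if_neg, if_pos (Finset.insert_subset hx hYr)]
            intro hc; exact hyl (hc (Finset.mem_insert_of_mem hy))
          obtain ⟨hpre, hne⟩ := ihr hr hp hYv hx hxv
          rw [h1, h2]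
          exact ⟨List.cons_prefix_cons.mpr ⟨rfl, hpre⟩, by simpa using hne⟩

theorem leftSpine_join (t : BTree X) : (t.leftSpine.map seq).flatten = t.seq := by
  induction t with
  | leaf x => simp [leftSpine, seq]
  | node l r ihl ihr => simp [leftSpine, seq, ihl]

theorem rightSpine_join (t : BTree X) : (t.rightSpine.map seq).flatten = t.seq := by
  induction t with
  | leaf x => simp [rightSpine, seq]
  | node l r ihl ihr => simp [rightSpine, seq, ihr]

theorem leftSpine_subtree {t q : BTree X} (h : q ∈ t.leftSpine) :
    ∃ p, t.subtreeAt p = some q := by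
  induction t with
  | leaf x => simp [leftSpine] at h; subst h; exact ⟨[], rfl⟩
  | node l r ihl ihr =>
    simp only [leftSpine, List.mem_append, List.mem_singleton] at h
    rcases h with h | h
    · obtain ⟨p, hp⟩ := ihl h; exact ⟨false :: p, hp⟩
    · subst h; exact ⟨[true], by simp [subtreeAt]⟩

theorem rightSpine_subtree {t q : BTree X} (h : q ∈ t.rightSpine) :
    ∃ p, t.subtreeAt p = some q := by
  induction t with
  | leaf x => simp [rightSpine] at h; subst h; exact ⟨[], rfl⟩
  | node l r ihl ihr =>
    simp only [rightSpine, List.mem_cons] at h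
    rcases h with h | h
    · subst h; exact ⟨[false], by simp [subtreeAt]⟩
    · obtain ⟨p, hp⟩ := ihr h; exact ⟨true :: p, hp⟩

theorem leftSpine_split {t q : BTree X} (h : q ∈ t.leftSpine) :
    ∃ A B, t.seq = A ++ q.seq ++ B ∧ (A = [] → q.seq.length ≤ 1) := by
  induction t with
  | leaf x =>
    simp [leftSpine] at h; subst h
    exact ⟨[], [], by simp, fun _ => by simp [seq]⟩
  | node l r ihl ihr =>
    simp only [leftSpine, List.mem_append, List.mem_singleton] at h
    rcases h with h | h
    · obtain ⟨A, B, hAB, hA⟩ := ihl h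
      exact ⟨A, B ++ r.seq, by simp [seq, hAB], hA⟩
    · subst h
      refine ⟨l.seq, [], by simp [seq], fun hc => absurd hc (seq_ne_nil l)⟩

theorem rightSpine_suffix_subtree {s : BTree X} {j : ℕ} (hj : j < s.rightSpine.length) :
    ∃ p v, s.subtreeAt p = some v ∧ v.seq = ((s.rightSpine.drop j).map seq).flatten := by
  induction s generalizing j with
  | leaf x =>
    simp [rightSpine] at hj; subst hj
    exact ⟨[], leaf x, rfl, by simp [rightSpine, seq]⟩
  | node l r ihl ihr =>
    cases j with
    | zero =>
      refine ⟨[], node l r, rfl, ?_⟩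
      simp [rightSpine, seq, rightSpine_join]
    | succ j =>
      simp only [rightSpine, List.length_cons, Nat.succ_lt_succ_iff] at hj
      obtain ⟨p, v, hp, hv⟩ := ihr hj
      exact ⟨true :: p, v, hp, by simpa [rightSpine] using hv⟩

theorem leaf_subtree {t : BTree X} {y : X} (h : y ∈ t.leaves) :
    ∃ p, t.subtreeAt p = some (leaf y) := by
  induction t with
  | leaf x =>
    rw [leaves_leaf, Finset.mem_singleton] at h; subst h; exact ⟨[], rfl⟩
  | node l r ihl ihr =>
    rw [leaves_node, Finset.mem_union] at h
    rcases h with h | h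
    · obtain ⟨p, hp⟩ := ihl h; exact ⟨false :: p, hp⟩
    · obtain ⟨p, hp⟩ := ihr h; exact ⟨true :: p, hp⟩

end BTree

namespace BTree

variable {X : Type} [DecidableEq X]

def mirror : BTree X → BTree X
  | leaf x => leaf x
  | node l r => node (mirror r) (mirror l)

theorem seq_mirror (t : BTree X) : (mirror t).seq = t.seq.reverse := by
  induction t with
  | leaf x => simp [mirror, seq]
  | node l r ihl ihr => simp [mirror, seq, ihl, ihr]

theorem leaves_mirror (t : BTree X) : (mirror t).leaves = t.leaves := by
  simp [leaves, seq_mirror]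

theorem phylo_mirror {t : BTree X} (h : t.Phylo) : (mirror t).Phylo := by
  rw [Phylo, seq_mirror]; exact List.nodup_reverse.mpr h

theorem leftSpine_mirror (t : BTree X) :
    (mirror t).leftSpine = t.rightSpine.reverse.map mirror := by
  induction t with
  | leaf x => simp [mirror, leftSpine, rightSpine]
  | node l r ihl ihr => simp [mirror, leftSpine, rightSpine, ihr]

theorem rightSpine_mirror (t : BTree X) :
    (mirror t).rightSpine = t.leftSpine.reverse.map mirror := by
  induction t with
  | leaf x => simp [mirror, leftSpine, rightSpine]
  | node l r ihl ihr => simp [mirror, leftSpine, rightSpine, ihl]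

theorem lcaPos_mirror {t : BTree X} {Y : Finset X} (ht : t.Phylo) (hY : Y.Nonempty) :
    lcaPos (mirror t) Y = (lcaPos t Y).map not := by
  induction t with
  | leaf x => simp [mirror, lcaPos]
  | node l r ihl ihr =>
    obtain ⟨hl, hr, hdisj⟩ := phylo_node ht
    obtain ⟨y, hy⟩ := hY
    show lcaPos (node (mirror r) (mirror l)) Y = _
    by_cases hYl : Y ⊆ l.leaves
    · have hYr : ¬ Y ⊆ r.leaves := fun hc =>
        (Finset.disjoint_left.mp hdisj (hYl hy)) (hc hy)
      rw [lcaPos, lcaPos, if_pos hYl, leaves_mirror, leaves_mirror, if_neg hYr,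
        if_pos hYl, ihl hl]
      simp
    · by_cases hYr : Y ⊆ r.leaves
      · rw [lcaPos, lcaPos, if_neg hYl, if_pos hYr, leaves_mirror, if_pos hYr, ihr hr]
        simp
      · rw [lcaPos, lcaPos, if_neg hYl, if_neg hYr, leaves_mirror, leaves_mirror,
          if_neg hYr, if_neg hYl]
        simp

theorem strictBelow_of_map_not {p q : List Bool}
    (h : StrictBelow (p.map not) (q.map not)) : StrictBelow p q := by
  obtain ⟨hpre, hne⟩ := h
  constructor
  · have := hpre.map not
    simpa [List.map_map, Function.comp_def, Bool.not_not] using this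
  · intro hc; exact hne (by rw [hc])

end BTree

namespace BTree

variable {X : Type} [DecidableEq X]

theorem rightSpine_ne_nil (t : BTree X) : t.rightSpine ≠ [] := by
  cases t <;> simp [rightSpine]

theorem caseA (t s : BTree X) (ht : t.Phylo) (hs : s.Phylo) (hseq : t.seq = s.seq)
    (τ : ℝ) (hτ : 1 < τ) (Q : BTree X) (hQmem : Q ∈ t.leftSpine)
    (hQbig : 2 * τ ≤ (Q.seq.length : ℝ))
    (hQsmall : (Q.seq.length : ℝ) ≤ (t.seq.length : ℝ) / 2)
    (hRsmall : ∀ r ∈ s.rightSpine, ((r.seq.length : ℝ)) ≤ (t.seq.length : ℝ) / 2) :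
    ∃ (x : X) (Y : Finset X), x ∈ t.leaves ∧ Y ⊆ t.leaves ∧ Y.Nonempty ∧
      τ ≤ (Y.card : ℝ) ∧
      StrictBelow (lcaPos t Y) (lcaPos t (insert x Y)) ∧
      StrictBelow (lcaPos s Y) (lcaPos s (insert x Y)) := by
  obtain ⟨A, B, hsplit, hA1⟩ := leftSpine_split hQmem
  set L := t.seq with hL
  set M := Q.seq with hM
  set N := L.length with hN
  have hLnd : L.Nodup := ht
  -- M has at least 3 elements
  have hq3 : 3 ≤ M.length := by
    by_contra hc
    push_neg at hc
    have : (M.length : ℝ) ≤ 2 := by exact_mod_cast Nat.lt_succ_iff.mp hc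
    linarith
  have hAne : A ≠ [] := by
    intro h; have := hA1 h; omega
  obtain ⟨a0, A', rfl⟩ := List.exists_cons_of_ne_nil hAne
  -- decompose s by its first right-spine piece
  obtain ⟨R1, RS', hRS⟩ := List.exists_cons_of_ne_nil (rightSpine_ne_nil s)
  have hR1mem : R1 ∈ s.rightSpine := by rw [hRS]; exact List.mem_cons_self
  set Pc := R1.seq with hPc
  set V := (RS'.map seq).flatten with hV
  have hdecomp : L = Pc ++ V := by
    have := rightSpine_join s
    rw [hRS] at this
    simp only [List.map_cons, List.flatten_cons] at this
    exact hseq.trans this.symm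
  -- nodup / disjointness bookkeeping
  have hnd1 : ((a0 :: A') ++ M ++ B).Nodup := by rw [← hsplit]; exact hLnd
  rw [List.append_assoc, List.nodup_append] at hnd1
  obtain ⟨hndA, hndMB, hdisjA⟩ := hnd1
  have hndM : M.Nodup := (List.nodup_append.mp hndMB).1
  have hnd2 : (Pc ++ V).Nodup := by rw [← hdecomp]; exact hLnd
  rw [List.nodup_append] at hnd2
  obtain ⟨hndP, hndV, hdisjPV⟩ := hnd2
  set Mf := M.toFinset with hMf
  set Pf := Pc.toFinset with hPf
  set Vf := V.toFinset with hVf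
  have hMcard : Mf.card = M.length := List.toFinset_card_of_nodup hndM
  have hPcard : Pf.card = Pc.length := List.toFinset_card_of_nodup hndP
  have hMsubL : ∀ y ∈ Mf, y ∈ t.leaves := by
    intro y hy
    rw [hMf, List.mem_toFinset] at hy
    rw [leaves, List.mem_toFinset, ← hL, hsplit]
    simp [hy]
  have hMPV : Mf ⊆ Pf ∪ Vf := by
    intro y hy
    have hyL : y ∈ L := by
      have := hMsubL y hy; rwa [leaves, List.mem_toFinset, ← hL] at this
    rw [hdecomp, List.mem_append] at hyL
    rcases hyL with h | h
    · exact Finset.mem_union_left _ (List.mem_toFinset.mpr h)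
    · exact Finset.mem_union_right _ (List.mem_toFinset.mpr h)
  have hsum : M.length ≤ (Mf ∩ Pf).card + (Mf ∩ Vf).card := by
    have h1 : Mf = Mf ∩ Pf ∪ Mf ∩ Vf := by
      rw [← Finset.inter_union_distrib_left]
      exact (Finset.inter_eq_left.mpr hMPV).symm
    calc M.length = Mf.card := hMcard.symm
      _ = (Mf ∩ Pf ∪ Mf ∩ Vf).card := by rw [← h1]
      _ ≤ (Mf ∩ Pf).card + (Mf ∩ Vf).card := Finset.card_union_le _ _
  -- the position of x = a0
  have hxL : a0 ∈ t.leaves := by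
    rw [leaves, List.mem_toFinset, ← hL, hsplit]; simp
  have hxsL : a0 ∈ s.leaves := by
    rw [leaves, List.mem_toFinset, ← hseq, hsplit]; simp
  have hxM : a0 ∉ Mf := by
    rw [hMf, List.mem_toFinset]
    intro hc
    exact hdisjA a0 List.mem_cons_self a0 (by simp [hc]) rfl
  -- Q is a subtree of t
  obtain ⟨pQ, hpQ⟩ := leftSpine_subtree hQmem
  have hQleaves : Q.leaves = Mf := rfl
  have hsleaves : s.leaves = t.leaves := by rw [leaves, leaves, ← hseq]
  have hτpos : (0:ℝ) < τ := by linarith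
  rcases le_or_gt M.length (2 * (Mf ∩ Pf).card) with hcase | hcase
  · -- Case i : Y = M ∩ P₁
    set Y := Mf ∩ Pf with hY
    have hYcard : τ ≤ (Y.card : ℝ) := by
      have h1 : (M.length : ℝ) ≤ 2 * (Y.card : ℝ) := by exact_mod_cast hcase
      linarith
    have hYne : Y.Nonempty := by
      rw [← Finset.card_pos]
      by_contra hc
      push_neg at hc
      have h0 : Y.card = 0 := Nat.le_zero.mp hc
      rw [h0] at hYcard
      push_cast at hYcard
      linarith
    have hYsub : Y ⊆ t.leaves := fun y hy => hMsubL y (Finset.mem_of_mem_inter_left hy)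
    -- find x outside M ∪ P
    have hMPsubL : Mf ∪ Pf ⊆ t.leaves := by
      intro y hy
      rcases Finset.mem_union.mp hy with h | h
      · exact hMsubL y h
      · rw [leaves, List.mem_toFinset, ← hL, hdecomp]
        rw [hPf, List.mem_toFinset] at h
        simp [h]
    have hLcard : t.leaves.card = N := by
      rw [leaves]; exact List.toFinset_card_of_nodup hLnd
    have hcardlt : (Mf ∪ Pf).card < t.leaves.card := by
      have h1 : ((Mf ∪ Pf).card : ℝ) + (Y.card : ℝ) = (Mf.card : ℝ) + (Pf.card : ℝ) := by
        exact_mod_cast Finset.card_union_add_card_inter Mf Pf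
      have h2 : (Mf.card : ℝ) ≤ (N : ℝ) / 2 := by rw [hMcard]; exact hQsmall
      have h3 : (Pf.card : ℝ) ≤ (N : ℝ) / 2 := by
        rw [hPcard]; exact hRsmall R1 hR1mem
      have : ((Mf ∪ Pf).card : ℝ) < (N : ℝ) := by linarith
      rw [hLcard]; exact_mod_cast this
    obtain ⟨x, hxmem, hxnot⟩ := Finset.not_subset.mp
      (fun hc => absurd (Finset.card_le_card hc) (not_le.mpr hcardlt))
    obtain ⟨pR, hpR⟩ := rightSpine_subtree hR1mem
    refine ⟨x, Y, hxmem, hYsub, hYne, hYcard, ?_, ?_⟩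
    · exact strict_of ht hpQ hYne (by rw [hQleaves]; exact Finset.inter_subset_left)
        hxmem (fun hc => hxnot (Finset.mem_union_left _ hc))
    · refine strict_of hs hpR hYne (show Y ⊆ R1.leaves from ?_) ?_ ?_
      · rw [show R1.leaves = Pf from rfl]; exact Finset.inter_subset_right
      · rw [hsleaves]; exact hxmem
      · rw [show R1.leaves = Pf from rfl]
        exact fun hc => hxnot (Finset.mem_union_right _ hc)
  · -- Case ii : Y = M ∩ V
    set Y := Mf ∩ Vf with hY
    have hY2 : M.length < 2 * Y.card := by omega
    have hYcard : τ ≤ (Y.card : ℝ) := by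
      have h1 : (M.length : ℝ) ≤ 2 * (Y.card : ℝ) := by exact_mod_cast le_of_lt hY2
      linarith
    have hYne : Y.Nonempty := by
      rw [← Finset.card_pos]; omega
    have hYsub : Y ⊆ t.leaves := fun y hy => hMsubL y (Finset.mem_of_mem_inter_left hy)
    -- the suffix subtree of s
    have hRS'ne : RS' ≠ [] := by
      intro hc
      rw [hc] at hV
      have : Vf = ∅ := by simp [hVf, hV]
      rw [hY, this, Finset.inter_empty] at hYne
      exact Finset.not_nonempty_empty hYne
    have h1m : 1 < s.rightSpine.length := by
      rw [hRS]
      cases RS' with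
      | nil => exact absurd rfl hRS'ne
      | cons c cs => simp
    obtain ⟨pv, v, hpv, hvseq⟩ := rightSpine_suffix_subtree h1m
    have hvleaves : v.leaves = Vf := by
      rw [leaves, hvseq, hRS]
      simp [hVf, hV]
    -- a0 ∉ V
    have hxV : a0 ∉ Vf := by
      have hPcne : Pc ≠ [] := seq_ne_nil R1
      obtain ⟨c, Pc', hPcc⟩ := List.exists_cons_of_ne_nil hPcne
      have h1 : L = c :: (Pc' ++ V) := by rw [hdecomp, hPcc]; simp
      have h2 : L = a0 :: (A' ++ M ++ B) := by rw [hsplit]; simp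
      have hca : c = a0 := by
        have := h1.symm.trans h2
        exact (List.cons.injEq _ _ _ _ ▸ this).1
      rw [hVf, List.mem_toFinset]
      intro hc
      exact hdisjPV a0 (by rw [hPcc, hca]; exact List.mem_cons_self) a0 hc rfl
    refine ⟨a0, Y, hxL, hYsub, hYne, hYcard, ?_, ?_⟩
    · exact strict_of ht hpQ hYne (by rw [hQleaves]; exact Finset.inter_subset_left)
        hxL (by rw [hQleaves]; exact hxM)
    · refine strict_of hs hpv hYne ?_ hxsL ?_
      · rw [hvleaves]; exact Finset.inter_subset_right
      · rw [hvleaves]; exact hxV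

end BTree

namespace BTree

variable {X : Type} [DecidableEq X]

theorem eq_leaf_of_len {t : BTree X} (h : t.seq.length ≤ 1) : ∃ x, t = leaf x := by
  cases t with
  | leaf x => exact ⟨x, rfl⟩
  | node l r =>
    exfalso
    have hl : 0 < l.seq.length := List.length_pos_iff.mpr (seq_ne_nil l)
    have hr : 0 < r.seq.length := List.length_pos_iff.mpr (seq_ne_nil r)
    have : (node l r).seq.length = l.seq.length + r.seq.length := by simp [seq]
    omega

end BTree

open BTree

/-- Lemma 5: let `t` and `s` be rooted binary trees on the same leaf set of size
`N` with identical pre-order leaf orderings.  If every subtree hanging off the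
left spine of `t` or the right spine of `s` has at most `2N/C` leaves (`C ≥ 4`),
and at least one such subtree has at least `N/log₂ n` leaves, then there is a
"good pair" `(x, Y)`: a leaf `x` and a set `Y` with `|Y| ≥ N/(2 log₂ n)` such
that in both trees `lca(Y)` is a strict descendant of `lca(Y ∪ {x})`. -/
theorem good_pair_exists {X : Type} [DecidableEq X]
    (n : ℕ) (t s : BTree X) (ht : t.Phylo) (hs : s.Phylo) (hseq : t.seq = s.seq)
    (C : ℝ) (hC : 4 ≤ C)
    (hsmall : ∀ q ∈ t.leftSpine ++ s.rightSpine,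
      (q.leaves.card : ℝ) ≤ 2 * (t.leaves.card : ℝ) / C)
    (hbig : ∃ q ∈ t.leftSpine ++ s.rightSpine,
      (t.leaves.card : ℝ) / Real.logb 2 n ≤ (q.leaves.card : ℝ)) :
    ∃ (x : X) (Y : Finset X), x ∈ t.leaves ∧ Y ⊆ t.leaves ∧
      (t.leaves.card : ℝ) / (2 * Real.logb 2 n) ≤ (Y.card : ℝ) ∧
      StrictBelow (lcaPos t Y) (lcaPos t (insert x Y)) ∧
      StrictBelow (lcaPos s Y) (lcaPos s (insert x Y)) := by
  classical
  have hNlen : t.leaves.card = t.seq.length := List.toFinset_card_of_nodup ht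
  have hsleaves : s.leaves = t.leaves := by rw [leaves, leaves, hseq]
  have hCpos : (0:ℝ) < C := by linarith
  -- N ≥ 2
  have hN2 : 2 ≤ t.seq.length := by
    by_contra hc
    push_neg at hc
    obtain ⟨z, rfl⟩ := eq_leaf_of_len (Nat.lt_succ_iff.mp hc)
    have h1 := hsmall (leaf z) (List.mem_append_left _ (by simp [leftSpine]))
    simp only [leaves_leaf, Finset.card_singleton, Nat.cast_one, mul_one] at h1
    have h2 : 2 / C ≤ 2 / 4 :=
      div_le_div_of_nonneg_left (by norm_num) (by norm_num) hC
    norm_num at h2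
    linarith
  by_cases hτ1 : (t.leaves.card : ℝ) / (2 * Real.logb 2 n) ≤ 1
  · -- small threshold: a singleton works
    have hcard2 : 1 < t.leaves.card := by omega
    obtain ⟨x, hx, y, hy, hxy⟩ := Finset.one_lt_card.mp hcard2
    obtain ⟨pt, hpt⟩ := leaf_subtree hy
    obtain ⟨ps, hps⟩ := leaf_subtree (show y ∈ s.leaves by rw [hsleaves]; exact hy)
    have hxny : x ∉ ({y} : Finset X) := by simpa using hxy
    refine ⟨x, {y}, hx, Finset.singleton_subset_iff.mpr hy, by simpa using hτ1, ?_, ?_⟩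
    · exact strict_of ht hpt (Finset.singleton_nonempty y)
        (by rw [leaves_leaf]) hx (by rw [leaves_leaf]; exact hxny)
    · exact strict_of hs hps (Finset.singleton_nonempty y)
        (by rw [leaves_leaf]) (by rw [hsleaves]; exact hx) (by rw [leaves_leaf]; exact hxny)
  · push_neg at hτ1
    set lg := Real.logb 2 n with hlg
    set Nr := (t.leaves.card : ℝ) with hNr
    have hNrpos : (0:ℝ) < Nr := by
      rw [hNr]; exact_mod_cast (by omega : 0 < t.leaves.card)
    -- all spine trees are small (≤ N/2)
    have h2NC : ∀ z ∈ t.leftSpine ++ s.rightSpine, (z.leaves.card : ℝ) ≤ Nr / 2 := by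
      intro z hz
      have h1 := hsmall z hz
      have h2 : 2 * Nr / C ≤ 2 * Nr / 4 :=
        div_le_div_of_nonneg_left (by linarith) (by norm_num) hC
      have h3 : 2 * Nr / 4 = Nr / 2 := by ring
      linarith
    obtain ⟨q, hqmem, hqbig⟩ := hbig
    have h2τ : Nr / lg = 2 * (Nr / (2 * lg)) := by ring
    rcases List.mem_append.mp hqmem with hqL | hqR
    · -- big subtree on the left spine of t
      obtain ⟨pq, hpq⟩ := leftSpine_subtree hqL
      have hqphylo : q.Phylo := subtreeAt_phylo hpq ht
      have hqcard : (q.leaves.card : ℝ) = (q.seq.length : ℝ) := by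
        rw [leaves]; exact_mod_cast List.toFinset_card_of_nodup hqphylo
      obtain ⟨x, Y, h1, h2, _, h4, h5, h6⟩ :=
        caseA t s ht hs hseq (Nr / (2 * lg)) hτ1 q hqL
          (by rw [← h2τ, ← hqcard]; exact hqbig)
          (by rw [← hqcard, ← hNlen, ← hNr]; exact h2NC q hqmem)
          (by
            intro r hr
            obtain ⟨pr, hpr⟩ := rightSpine_subtree hr
            have hrphylo : r.Phylo := subtreeAt_phylo hpr hs
            have hrcard : (r.leaves.card : ℝ) = (r.seq.length : ℝ) := by
              rw [leaves]; exact_mod_cast List.toFinset_card_of_nodup hrphylo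
            rw [← hrcard, ← hNlen, ← hNr]
            exact h2NC r (List.mem_append_right _ hr))
      exact ⟨x, Y, h1, h2, h4, h5, h6⟩
    · -- big subtree on the right spine of s : mirror everything
      obtain ⟨pq, hpq⟩ := rightSpine_subtree hqR
      have hqphylo : q.Phylo := subtreeAt_phylo hpq hs
      have hqcard : (q.leaves.card : ℝ) = (q.seq.length : ℝ) := by
        rw [leaves]; exact_mod_cast List.toFinset_card_of_nodup hqphylo
      have hseq' : (mirror s).seq = (mirror t).seq := by
        rw [seq_mirror, seq_mirror, hseq]
      have hmirlen : (mirror s).seq.length = t.seq.length := by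
        rw [seq_mirror, List.length_reverse, hseq]
      obtain ⟨x, Y, h1, h2, h3, h4, h5, h6⟩ :=
        caseA (mirror s) (mirror t) (phylo_mirror hs) (phylo_mirror ht) hseq'
          (Nr / (2 * lg)) hτ1 (mirror q)
          (by
            rw [leftSpine_mirror]
            exact List.mem_map_of_mem (f := mirror) (List.mem_reverse.mpr hqR))
          (by
            rw [seq_mirror, List.length_reverse, ← hqcard, ← h2τ]
            exact hqbig)
          (by
            rw [seq_mirror, List.length_reverse, ← hqcard, hmirlen, ← hNlen, ← hNr]
            exact h2NC q hqmem)
          (by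
            intro r hr
            rw [rightSpine_mirror] at hr
            obtain ⟨r', hr', rfl⟩ := List.mem_map.mp hr
            rw [List.mem_reverse] at hr'
            obtain ⟨pr, hpr⟩ := leftSpine_subtree hr'
            have hrphylo : r'.Phylo := subtreeAt_phylo hpr ht
            have hrcard : (r'.leaves.card : ℝ) = (r'.seq.length : ℝ) := by
              rw [leaves]; exact_mod_cast List.toFinset_card_of_nodup hrphylo
            rw [seq_mirror, List.length_reverse, ← hrcard, hmirlen, ← hNlen, ← hNr]
            exact h2NC r' (List.mem_append_left _ hr'))
      rw [leaves_mirror, hsleaves] at h1 h2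
      have hxYne : (insert x Y).Nonempty := Finset.insert_nonempty x Y
      rw [lcaPos_mirror hs h3, lcaPos_mirror hs hxYne] at h5
      rw [lcaPos_mirror ht h3, lcaPos_mirror ht hxYne] at h6
      exact ⟨x, Y, h1, h2, h4, strictBelow_of_map_not h6, strictBelow_of_map_not h5⟩
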